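/- Let n ≥ 1, let π_I : ℝⁿ → ℝ be the projection onto a distinguished coordinate, let f₀, g : ℝⁿ → ℝⁿ satisfy π_I(f₀(x)) = π_I(x) for all x ∈ ℝⁿ, let ε ≥ 0 and set f_ε := f₀ + ε·g. Assume f_ε is a bijection and that there is L_g > 0 with |π_I(g(x₁)) − π_I(g(x₂))| ≤ L_g‖x₁ − x₂‖ for all x₁, x₂ ∈ ℝⁿ. Let C > 0, λ ∈ (0,1), and let x, z ∈ ℝⁿ satisfy ‖f_ε^{−j}(x) − f_ε^{−j}(z)‖ < C·λ^{j} for all integers j ≥ 0. Then |π_I(x − z)| ≤ ε·(λ/(1−λ))·C·L_g. -/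
import Mathlib

lemma coord_le_norm {n : ℕ} (w : EuclideanSpace ℝ (Fin n)) (i : Fin n) : |w i| ≤ ‖w‖ := by
  rw [EuclideanSpace.norm_eq]
  have : |w i| = Real.sqrt (‖w i‖ ^ 2) := by
    rw [Real.sqrt_sq_eq_abs]; simp
  rw [this]
  apply Real.sqrt_le_sqrt
  exact Finset.single_le_sum (fun j _ => sq_nonneg ‖w j‖) (Finset.mem_univ i)

/-- Bound on the difference of the action coordinate `I` between a point and the base
point of the unstable fiber on which it lies. -/
theorem stmt_4 (n : ℕ) (hn : 1 ≤ n) (iI : Fin n)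
    (f₀ g : EuclideanSpace ℝ (Fin n) → EuclideanSpace ℝ (Fin n))
    (hf₀ : ∀ x, f₀ x iI = x iI)
    (ε : ℝ) (hε : 0 ≤ ε)
    (fε : EuclideanSpace ℝ (Fin n) → EuclideanSpace ℝ (Fin n))
    (hfε : ∀ x, fε x = f₀ x + ε • g x)
    (hbij : Function.Bijective fε)
    (Lg : ℝ) (hLg : 0 < Lg)
    (hLip : ∀ x₁ x₂, |g x₁ iI - g x₂ iI| ≤ Lg * ‖x₁ - x₂‖)
    (C lam : ℝ) (hC : 0 < C) (hlam : 0 < lam) (hlam1 : lam < 1)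
    (x z : EuclideanSpace ℝ (Fin n))
    (hx : ∀ j : ℕ, ‖(Function.invFun fε)^[j] x - (Function.invFun fε)^[j] z‖ < C * lam ^ j) :
    |(x - z) iI| ≤ ε * (lam / (1 - lam)) * C * Lg := by
  have hinv : ∀ w, fε (Function.invFun fε w) = w :=
    Function.rightInverse_invFun hbij.surjective
  set u : ℕ → EuclideanSpace ℝ (Fin n) := fun j => (Function.invFun fε)^[j] x with hu
  set v : ℕ → EuclideanSpace ℝ (Fin n) := fun j => (Function.invFun fε)^[j] z with hv
  have hstep : ∀ (w : ℕ → EuclideanSpace ℝ (Fin n)),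
      (∀ j, w (j+1) = Function.invFun fε (w j)) →
      ∀ j, w j iI = w (j+1) iI + ε * g (w (j+1)) iI := by
    intro w hw j
    have h1 : fε (w (j+1)) = w j := by rw [hw j]; exact hinv _
    have h2 := congrArg (fun q : EuclideanSpace ℝ (Fin n) => q iI) h1
    simp only [hfε] at h2
    have h3 : (f₀ (w (j+1)) + ε • g (w (j+1))) iI
        = f₀ (w (j+1)) iI + ε * g (w (j+1)) iI := rfl
    rw [h3, hf₀] at h2
    linarith
  have hsum : ∀ (w : ℕ → EuclideanSpace ℝ (Fin n)),
      (∀ j, w j iI = w (j+1) iI + ε * g (w (j+1)) iI) →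
      ∀ m, w 0 iI = w m iI + ε * ∑ j ∈ Finset.range m, g (w (j+1)) iI := by
    intro w hw m
    induction m with
    | zero => simp
    | succ m ih => rw [Finset.sum_range_succ, ih, hw m]; ring
  have hushift : ∀ j, u (j+1) = Function.invFun fε (u j) := by
    intro j; simp [hu, Function.iterate_succ_apply']
  have hvshift : ∀ j, v (j+1) = Function.invFun fε (v j) := by
    intro j; simp [hv, Function.iterate_succ_apply']
  have hus := hsum u (hstep u hushift)
  have hvs := hsum v (hstep v hvshift)
  have hgeom : ∀ m : ℕ, ∑ j ∈ Finset.range m, lam ^ j ≤ 1 / (1 - lam) := by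
    intro m
    have h1 : (0:ℝ) < 1 - lam := by linarith
    have heq : ∑ j ∈ Finset.range m, lam ^ j = (1 - lam ^ m) / (1 - lam) := by
      rw [geom_sum_eq (by linarith : lam ≠ 1)]
      rw [div_eq_div_iff (by linarith) (by linarith)]
      ring
    rw [heq]
    have hp : 0 < lam ^ m := pow_pos hlam m
    gcongr
    linarith
  have key : ∀ m : ℕ, |x iI - z iI|
      ≤ C * lam ^ m + ε * (lam / (1 - lam)) * C * Lg := by
    intro m
    have hu0 : u 0 = x := rfl
    have hv0 : v 0 = z := rfl
    have hdiff : x iI - z iI = (u m iI - v m iI)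
        + ε * ∑ j ∈ Finset.range m, (g (u (j+1)) iI - g (v (j+1)) iI) := by
      rw [Finset.sum_sub_distrib]
      have := hus m
      have := hvs m
      rw [hu0] at hus
      rw [hv0] at hvs
      rw [hus m, hvs m]; ring
    rw [hdiff]
    have h1 : |u m iI - v m iI| ≤ C * lam ^ m := by
      have : u m iI - v m iI = (u m - v m) iI := rfl
      rw [this]
      exact (coord_le_norm _ _).trans (hx m).le
    have h2 : |∑ j ∈ Finset.range m, (g (u (j+1)) iI - g (v (j+1)) iI)|
        ≤ (lam / (1 - lam)) * C * Lg := by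
      calc |∑ j ∈ Finset.range m, (g (u (j+1)) iI - g (v (j+1)) iI)|
          ≤ ∑ j ∈ Finset.range m, |g (u (j+1)) iI - g (v (j+1)) iI| :=
            Finset.abs_sum_le_sum_abs _ _
        _ ≤ ∑ j ∈ Finset.range m, Lg * (C * lam ^ (j+1)) := by
            apply Finset.sum_le_sum
            intro j _
            exact (hLip _ _).trans (by
              have := (hx (j+1)).le
              nlinarith [this, hLg.le])
        _ = Lg * C * lam * ∑ j ∈ Finset.range m, lam ^ j := by
            rw [Finset.mul_sum]; congr 1; ext j; ring
        _ ≤ Lg * C * lam * (1 / (1 - lam)) := by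
            apply mul_le_mul_of_nonneg_left (hgeom m)
            positivity
        _ = (lam / (1 - lam)) * C * Lg := by ring
    calc |(u m iI - v m iI) + ε * ∑ j ∈ Finset.range m, (g (u (j+1)) iI - g (v (j+1)) iI)|
        ≤ |u m iI - v m iI| + |ε * ∑ j ∈ Finset.range m, (g (u (j+1)) iI - g (v (j+1)) iI)| :=
          abs_add_le _ _
      _ ≤ C * lam ^ m + ε * ((lam / (1 - lam)) * C * Lg) := by
          rw [abs_mul, abs_of_nonneg hε]
          exact add_le_add h1 (mul_le_mul_of_nonneg_left h2 hε)
      _ = C * lam ^ m + ε * (lam / (1 - lam)) * C * Lg := by ring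
  have hxz : (x - z) iI = x iI - z iI := rfl
  rw [hxz]
  have hlim : Filter.Tendsto (fun m : ℕ => C * lam ^ m + ε * (lam / (1 - lam)) * C * Lg)
      Filter.atTop (nhds (0 + ε * (lam / (1 - lam)) * C * Lg)) := by
    apply Filter.Tendsto.add _ tendsto_const_nhds
    simpa using (tendsto_pow_atTop_nhds_zero_of_lt_one hlam.le hlam1).const_mul C
  have := ge_of_tendsto' hlim key
  linarith
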